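/- Let (X, μ) be a measure space, f : X → ℝ a measurable function with 0 ≤ f ≤ 1, and H a nonempty set of measurable functions X → ℝ taking values in [0, 1]. Let A ⊆ B be measurable subsets of X with μ(B) < ∞, and for a measurable set S define ε_S(h) = ∫_S |h(x) − f(x)| dμ(x). Suppose there exists h₀ ∈ H with ε_A(h₀) = ⨅_{h ∈ H} ε_A(h) and ε_{B \ A}(h₀) = ⨅_{h ∈ H} ε_{B \ A}(h). Then every h ∈ H satisfying ε_B(h) = ⨅_{h' ∈ H} ε_B(h') also satisfies ε_A(h) = ⨅_{h' ∈ H} ε_A(h'). -/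

import Mathlib

open MeasureTheory

/-- If some `h₀ ∈ H` simultaneously minimizes the disagreement error
`ε_S(h) = ∫_S |h − f| dμ` on `A` and on `B \ A` (where `A ⊆ B`, `μ B < ∞`),
then every `h ∈ H` minimizing the error on `B` also minimizes it on `A`. -/
theorem stmt_2 {X : Type*} [MeasurableSpace X] (μ : Measure X)
    (f : X → ℝ) (hf : Measurable f) (hf0 : ∀ x, 0 ≤ f x) (hf1 : ∀ x, f x ≤ 1)
    (H : Set (X → ℝ)) [Nonempty ↥H]
    (hH : ∀ h ∈ H, Measurable h ∧ (∀ x, 0 ≤ h x) ∧ (∀ x, h x ≤ 1))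
    (A B : Set X) (hAm : MeasurableSet A) (hBm : MeasurableSet B)
    (hAB : A ⊆ B) (hμB : μ B < ⊤)
    (h₀ : X → ℝ) (h₀H : h₀ ∈ H)
    (h₀A : ∫ x in A, |h₀ x - f x| ∂μ =
      ⨅ h : H, ∫ x in A, |(h : X → ℝ) x - f x| ∂μ)
    (h₀BA : ∫ x in B \ A, |h₀ x - f x| ∂μ =
      ⨅ h : H, ∫ x in B \ A, |(h : X → ℝ) x - f x| ∂μ) :
    ∀ h ∈ H,
      (∫ x in B, |h x - f x| ∂μ = ⨅ h' : H, ∫ x in B, |(h' : X → ℝ) x - f x| ∂μ) →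
      ∫ x in A, |h x - f x| ∂μ = ⨅ h' : H, ∫ x in A, |(h' : X → ℝ) x - f x| ∂μ := by
  -- integrability on B for any g ∈ H
  have hIntB : ∀ g ∈ H, IntegrableOn (fun x => |g x - f x|) B μ := by
    intro g hg
    obtain ⟨hgm, hg0, hg1⟩ := hH g hg
    have hmeas : Measurable fun x => |g x - f x| := (hgm.sub hf).abs
    refine Integrable.mono' (g := fun _ => (1 : ℝ)) ?_ hmeas.aestronglyMeasurable ?_
    · exact integrableOn_const hμB.ne
    · filter_upwards with x
      rw [Real.norm_eq_abs, abs_abs, abs_sub_le_iff]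
      constructor <;> nlinarith [hg0 x, hg1 x, hf0 x, hf1 x]
  have hsplit : ∀ g ∈ H,
      ∫ x in B, |g x - f x| ∂μ
        = (∫ x in A, |g x - f x| ∂μ) + ∫ x in B \ A, |g x - f x| ∂μ := by
    intro g hg
    have hInt := hIntB g hg
    have hA : IntegrableOn (fun x => |g x - f x|) A μ := hInt.mono_set hAB
    have hBA : IntegrableOn (fun x => |g x - f x|) (B \ A) μ :=
      hInt.mono_set Set.diff_subset
    have : B = A ∪ (B \ A) := (Set.union_diff_cancel hAB).symm
    rw [this,
      setIntegral_union (disjoint_sdiff_self_right) (hBm.diff hAm) hA hBA,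
      Set.union_diff_cancel hAB]
  -- bounded below
  have hbddS : ∀ S : Set X, BddBelow (Set.range fun h' : H =>
      ∫ x in S, |(h' : X → ℝ) x - f x| ∂μ) := by
    intro S
    refine ⟨0, ?_⟩
    rintro y ⟨h', rfl⟩
    exact integral_nonneg fun x => abs_nonneg _
  intro h hh hBmin
  have hAle : ⨅ h' : H, (∫ x in A, |(h' : X → ℝ) x - f x| ∂μ)
      ≤ ∫ x in A, |h x - f x| ∂μ := ciInf_le (hbddS A) ⟨h, hh⟩
  have hBAle : ⨅ h' : H, (∫ x in B \ A, |(h' : X → ℝ) x - f x| ∂μ)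
      ≤ ∫ x in B \ A, |h x - f x| ∂μ := ciInf_le (hbddS (B \ A)) ⟨h, hh⟩
  have hBle : ⨅ h' : H, (∫ x in B, |(h' : X → ℝ) x - f x| ∂μ)
      ≤ ∫ x in B, |h₀ x - f x| ∂μ := ciInf_le (hbddS B) ⟨h₀, h₀H⟩
  have e1 := hsplit h hh
  have e2 := hsplit h₀ h₀H
  have : ∫ x in A, |h x - f x| ∂μ ≤ ⨅ h' : H, ∫ x in A, |(h' : X → ℝ) x - f x| ∂μ := by
    rw [← h₀A]
    rw [hBmin] at e1
    rw [h₀A, h₀BA] at e2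
    rw [h₀A]
    linarith
  linarith
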